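/- arXiv:1711.04122 — 5 statements merged into one kernel-verified Lean document; each statement's English description precedes it below -/
import Mathlib

section
/- If G_Λ is an integral basis for a countable set of exponents Λ (i.e., every λ_j is a ℤ-linear combination of elements of G_Λ), then two exponential sums A₁ = Σ_{j≥1} a_j e^{λ_j p} and A₂ = Σ_{j≥1} b_j e^{λ_j p} satisfy A₁ ∼* A₂ if and only if there exists a single vector x₀ ∈ ℝ^{#G_Λ} such that b_j = a_j e^{i ⟨r_j, x₀⟩} for every j ≥ 1, where r_j ∈ ℤ^{#G_Λ} are the coordinate vectors of λ_j with respect to G_Λ. -/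
def BohrEquiv (Λ : ℕ → ℝ) (a b : ℕ → ℂ) : Prop :=
  ∀ n : ℕ, ∃ ψ : ℝ →ₗ[ℚ] ℝ, ∀ j ≤ n, b j = a j * Complex.exp (Complex.I * (ψ (Λ j) : ℂ))

private lemma circle_exp_zsmul (c : ℤ) (t : ℝ) :
    Circle.exp ((c : ℝ) * t) = Circle.exp t ^ c := by
  have h : (c : ℝ) * t = c • t := by simp
  rw [h]
  have := map_zsmul Circle.expHom c t
  simpa using congrArg Additive.toMul this

private lemma circle_exp_sum (s : Finset ℕ) (u : ℕ → ℝ) :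
    Circle.exp (∑ k ∈ s, u k) = ∏ k ∈ s, Circle.exp (u k) := by
  classical
  induction s using Finset.cons_induction with
  | empty => simp
  | cons k s hk ih => rw [Finset.sum_cons, Finset.prod_cons, Circle.exp_add, ih]

private lemma circle_exp_finsupp (t : ℕ → ℝ) (f : ℕ →₀ ℤ) :
    Circle.exp (f.sum fun k c => (c : ℝ) * t k) =
      ∏ k ∈ f.support, Circle.exp (t k) ^ (f k) := by
  rw [Finsupp.sum, circle_exp_sum]
  exact Finset.prod_congr rfl fun k _ => circle_exp_zsmul (f k) (t k)

private lemma lin_apply (ψ : ℝ →ₗ[ℚ] ℝ) (Λ : ℕ → ℝ) (g : ℕ → ℝ) (r : ℕ → (ℕ →₀ ℤ))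
    (hr : ∀ j, Λ j = (r j).sum fun k c => (c : ℝ) * g k) (j : ℕ) :
    ψ (Λ j) = (r j).sum fun k c => (c : ℝ) * ψ (g k) := by
  rw [hr j, Finsupp.sum, Finsupp.sum, map_sum]
  refine Finset.sum_congr rfl fun k _ => ?_
  have h1 : ((r j k : ℝ)) * g k = ((r j k : ℚ)) • g k := by
    simp [Rat.smul_def]
  have h2 : ((r j k : ℝ)) * ψ (g k) = ((r j k : ℚ)) • ψ (g k) := by
    simp [Rat.smul_def]
  rw [h1, h2, map_smul]

private lemma exists_extension (g : ℕ → ℝ) (hg : LinearIndependent ℚ g) (x : ℕ → ℝ) :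
    ∃ ψ : ℝ →ₗ[ℚ] ℝ, ∀ k, ψ (g k) = x k := by
  classical
  have hg' : LinearIndepOn ℚ id (Set.range g) := (linearIndepOn_id_range_iff hg.injective).mpr hg
  let B := Module.Basis.extend hg'
  let f : ℝ → ℝ := fun y => if h : ∃ k, g k = y then x h.choose else 0
  refine ⟨B.constr ℚ (fun i => f (B i)), fun k => ?_⟩
  have hmem : g k ∈ hg'.extend (Set.subset_univ _) :=
    hg'.subset_extend _ ⟨k, rfl⟩
  have hB : B ⟨g k, hmem⟩ = g k := Module.Basis.extend_apply_self hg' ⟨g k, hmem⟩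
  have : (B.constr ℚ (fun i => f (B i))) (B ⟨g k, hmem⟩) = f (B ⟨g k, hmem⟩) :=
    Module.Basis.constr_basis B ℚ _ _
  rw [hB] at this
  rw [this]
  have hex : ∃ k', g k' = g k := ⟨k, rfl⟩
  have : f (g k) = x hex.choose := dif_pos hex
  rw [this, hg.injective hex.choose_spec]

/-- With an integral basis `g` (each exponent a ℤ-linear combination of the ℚ-linearly
independent family `g`, with coordinates `r j`), Bohr equivalence is characterized by a
single vector `x₀`. -/
theorem bohrEquiv_iff_single_vector_of_integral_basis
    (Λ : ℕ → ℝ) (hΛ : Function.Injective Λ)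
    (g : ℕ → ℝ) (hg : LinearIndependent ℚ g)
    (r : ℕ → (ℕ →₀ ℤ)) (hr : ∀ j, Λ j = (r j).sum fun k c => (c : ℝ) * g k)
    (a b : ℕ → ℂ) :
    BohrEquiv Λ a b ↔
    ∃ x : ℕ → ℝ, ∀ j, b j =
      a j * Complex.exp (Complex.I * (((r j).sum fun k c => (c : ℝ) * x k : ℝ) : ℂ)) := by
  classical
  constructor
  · intro h
    -- the constraint sets in the compact space `ℕ → Circle`
    set S : ℕ → Set (ℕ → Circle) := fun n =>
      {z | ∀ j ≤ n, b j = a j * ((∏ k ∈ (r j).support, z k ^ ((r j) k) : Circle) : ℂ)} with hS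
    have hcont : ∀ j : ℕ, Continuous fun z : ℕ → Circle =>
        a j * ((∏ k ∈ (r j).support, z k ^ ((r j) k) : Circle) : ℂ) := by
      intro j
      refine continuous_const.mul (Continuous.comp continuous_subtype_val ?_)
      exact (show Continuous (fun z : ℕ → Circle => (∏ k ∈ (r j).support, z k ^ ((r j) k) : Circle)) from continuous_finset_prod _ fun k _ =>
        (continuous_zpow ((r j) k)).comp (continuous_apply k))
    have hclosed : ∀ n, IsClosed (S n) := by
      intro n
      have : S n = ⋂ j ∈ Finset.Iic n, {z : ℕ → Circle |
          b j = a j * ((∏ k ∈ (r j).support, z k ^ ((r j) k) : Circle) : ℂ)} := by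
        ext z; simp [hS, Set.mem_iInter]
      rw [this]
      exact isClosed_biInter fun j _ => isClosed_eq continuous_const (hcont j)
    have hne : ∀ n, (S n).Nonempty := by
      intro n
      obtain ⟨ψ, hψ⟩ := h n
      refine ⟨fun k => Circle.exp (ψ (g k)), fun j hj => ?_⟩
      have key : (∏ k ∈ (r j).support, Circle.exp (ψ (g k)) ^ ((r j) k) : Circle) =
          Circle.exp (ψ (Λ j)) := by
        rw [lin_apply ψ Λ g r hr j, circle_exp_finsupp]
      rw [key]
      rw [hψ j hj, Circle.coe_exp]
      ring_nf
    have hdir : Directed (· ⊇ ·) S := by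
      intro m n
      refine ⟨max m n, fun z hz j hj => hz j (le_trans hj (le_max_left m n)),
        fun z hz j hj => hz j (le_trans hj (le_max_right m n))⟩
    have hcompact : ∀ n, IsCompact (S n) := fun n => (hclosed n).isCompact
    obtain ⟨z, hz⟩ := IsCompact.nonempty_iInter_of_directed_nonempty_isCompact_isClosed
      S hdir hne hcompact hclosed
    refine ⟨fun k => Complex.arg (z k), fun j => ?_⟩
    have hzj : b j = a j * ((∏ k ∈ (r j).support, z k ^ ((r j) k) : Circle) : ℂ) :=
      (Set.mem_iInter.1 hz j) j le_rfl
    have key : (∏ k ∈ (r j).support, z k ^ ((r j) k) : Circle) =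
        Circle.exp ((r j).sum fun k c => (c : ℝ) * Complex.arg (z k)) := by
      rw [circle_exp_finsupp]
      refine Finset.prod_congr rfl fun k _ => ?_
      rw [Circle.exp_arg]
    rw [hzj, key, Circle.coe_exp]
    ring_nf
  · rintro ⟨x, hx⟩
    obtain ⟨ψ, hψ⟩ := exists_extension g hg x
    intro n
    refine ⟨ψ, fun j _ => ?_⟩
    have : ψ (Λ j) = (r j).sum fun k c => (c : ℝ) * x k := by
      rw [lin_apply ψ Λ g r hr j]
      exact Finsupp.sum_congr fun k _ => by rw [hψ k]
    rw [this]
    exact hx j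
end

section
/- Let Λ = {λ₁,…,λₙ} be distinct real numbers and let f₁(t) = Σ_{j=1}^n a_j e^{i λ_j t} and f₂(t) = Σ_{j=1}^n b_j e^{i λ_j t} be equivalent trigonometric polynomials (f₁ ∼* f₂). Then for every d > 0 and every ε > 0 there exists τ > d such that Σ_{j=1}^n |a_j e^{i λ_j τ} − b_j| < ε. -/
open Complex Finset intervalIntegral

lemma normSq_one_add_exp (x : ℝ) :
    Complex.normSq (1 + Complex.exp ((x : ℂ) * Complex.I)) = 2 + 2 * Real.cos x := by
  rw [Complex.normSq_apply]
  simp only [Complex.add_re, Complex.add_im, Complex.one_re, Complex.one_im,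
    Complex.exp_ofReal_mul_I_re, Complex.exp_ofReal_mul_I_im]
  nlinarith [Real.sin_sq_add_cos_sq x]

lemma one_add_exp_pow (N : ℕ) (x : ℝ) :
    (1 + Complex.exp ((x : ℂ) * Complex.I)) ^ N
      = ∑ k ∈ Finset.range (N + 1),
          (N.choose k : ℂ) * Complex.exp (((k : ℝ) * x : ℝ) * Complex.I) := by
  rw [add_comm, add_pow]
  refine Finset.sum_congr rfl fun k hk => ?_
  rw [one_pow, mul_one, ← Complex.exp_nat_mul, mul_comm]
  push_cast
  ring_nf

lemma G_expand (n N : ℕ) (x : Fin n → ℝ) :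
    (∏ j, (1 + Complex.exp ((x j : ℂ) * Complex.I)) ^ N)
      = ∑ m ∈ Fintype.piFinset (fun _ : Fin n => Finset.range (N + 1)),
          ((∏ j, (N.choose (m j) : ℝ)) : ℂ) *
            Complex.exp (((∑ j, (m j : ℝ) * x j : ℝ)) * Complex.I) := by
  simp_rw [one_add_exp_pow]
  rw [Finset.prod_univ_sum]
  refine Finset.sum_congr rfl fun m hm => ?_
  rw [Finset.prod_mul_distrib, ← Complex.exp_sum]
  push_cast [Finset.sum_mul]
  ring_nf
  congr 2
  exact Finset.sum_congr rfl fun _ _ => by ring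

lemma exp_integral_ne (ω φ d T : ℝ) (hω : ω ≠ 0) :
    ‖∫ τ in d..T, Complex.exp (((ω * τ - φ : ℝ) : ℂ) * Complex.I)‖ ≤ 2 / |ω| := by
  have hrw : ∀ τ : ℝ, Complex.exp (((ω * τ - φ : ℝ) : ℂ) * Complex.I)
      = Complex.exp (((-φ : ℝ) : ℂ) * Complex.I) * Complex.exp (((ω : ℂ) * Complex.I) * τ) := by
    intro τ; rw [← Complex.exp_add]; push_cast; ring_nf
  have hc : ((ω : ℂ) * Complex.I) ≠ 0 := by
    simp [Complex.ofReal_ne_zero.mpr hω, Complex.I_ne_zero]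
  simp_rw [hrw]
  rw [intervalIntegral.integral_const_mul, integral_exp_mul_complex hc]
  have habs : ∀ t : ℝ, ‖Complex.exp (((ω : ℂ) * Complex.I) * t)‖ = 1 := fun t => by
    rw [show ((ω : ℂ) * Complex.I) * t = ((ω * t : ℝ) : ℂ) * Complex.I by push_cast; ring]
    exact Complex.norm_exp_ofReal_mul_I _
  rw [norm_mul, Complex.norm_exp_ofReal_mul_I, one_mul, norm_div]
  have h1 : ‖(ω : ℂ) * Complex.I‖ = |ω| := by
    rw [norm_mul, Complex.norm_I, Complex.norm_real, Real.norm_eq_abs, mul_one]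
  rw [h1]
  gcongr
  calc ‖Complex.exp (((ω : ℂ) * Complex.I) * T) - Complex.exp (((ω : ℂ) * Complex.I) * d)‖
      ≤ ‖Complex.exp (((ω : ℂ) * Complex.I) * T)‖
        + ‖Complex.exp (((ω : ℂ) * Complex.I) * d)‖ := by
        exact norm_sub_le _ _
    _ ≤ 2 := by rw [habs, habs]; norm_num

lemma exp_cont (ω φ : ℝ) :
    Continuous fun τ : ℝ => Complex.exp (((ω * τ - φ : ℝ) : ℂ) * Complex.I) := by
  fun_prop

lemma ofReal_intervalIntegral (f : ℝ → ℝ) (a b : ℝ) :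
    ((∫ x in a..b, f x : ℝ) : ℂ) = ∫ x in a..b, ((f x : ℝ) : ℂ) :=
  (RCLike.intervalIntegral_ofReal (𝕜 := ℂ) (f := f)).symm

set_option maxHeartbeats 2000000 in
lemma kron (n : ℕ) (lam : Fin n → ℝ) (ψ : ℝ →ₗ[ℚ] ℝ) (d c : ℝ)
    (hc1 : -1 ≤ c) (hc2 : c < 1) :
    ∃ τ, d < τ ∧ ∀ j, c < Real.cos (lam j * τ - ψ (lam j)) := by
  by_contra hcon
  push_neg at hcon
  -- hcon : ∀ τ, d < τ → ∃ j, Real.cos (lam j * τ - ψ (lam j)) ≤ c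
  rcases Nat.eq_zero_or_pos n with hn0 | hn0
  · obtain ⟨j, -⟩ := hcon (d + 1) (by linarith)
    exact absurd j.2 (by omega)
  set s : ℝ := (2 + 2 * c) / 4 with hs
  have hs0 : 0 ≤ s := div_nonneg (by linarith) (by norm_num)
  have hs1 : s < 1 := by rw [hs]; linarith [div_lt_one (show (0:ℝ) < 4 by norm_num) |>.mpr (show 2 + 2*c < 4 by linarith)]
  obtain ⟨L, hL1, hLs⟩ : ∃ L : ℕ, 1 ≤ L ∧ (L : ℝ) ^ (2 * n) * (s ^ 2) ^ L < 1 / 4 ^ n := by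
    have h4 : (0:ℝ) < 1 / 4 ^ n := by positivity
    have ht := tendsto_pow_const_mul_const_pow_of_lt_one (2 * n)
      (by positivity : (0:ℝ) ≤ s ^ 2) (by nlinarith : s ^ 2 < 1)
    have h2 := (ht.eventually (gt_mem_nhds h4)).and (Filter.eventually_ge_atTop 1)
    obtain ⟨L, hL⟩ := h2.exists
    exact ⟨L, hL.2, hL.1⟩
  set N : ℕ := 2 * L with hN
  set θ : Fin n → ℝ := fun j => ψ (lam j) with hθ
  set M : Finset (Fin n → ℕ) := Fintype.piFinset fun _ => Finset.range (N + 1) with hM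
  set Cr : (Fin n → ℕ) → ℝ := fun m => ∏ j, (N.choose (m j) : ℝ) with hCr
  set Sf : (Fin n → ℕ) → ℝ := fun m => ∑ j, (m j : ℝ) * lam j with hSf
  set Th : (Fin n → ℕ) → ℝ := fun m => ∑ j, (m j : ℝ) * θ j with hTh
  have hCr0 : ∀ m, 0 ≤ Cr m := fun m => Finset.prod_nonneg fun j _ => by positivity
  have hψS : ∀ m, ψ (Sf m) = Th m := by
    intro m
    rw [hSf]
    simp only
    rw [map_sum]
    refine Finset.sum_congr rfl fun j _ => ?_
    rw [show ((m j : ℝ)) * lam j = ((m j : ℚ)) • lam j by rw [Rat.smul_def]; push_cast; ring,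
      map_smul, Rat.smul_def]
    push_cast
    ring
  have hlin : ∀ m m', Sf m = Sf m' → Th m = Th m' := fun m m' hmm => by
    rw [← hψS, ← hψS, hmm]
  set G : ℝ → ℂ :=
    fun τ => ∏ j, (1 + Complex.exp (((lam j * τ - θ j : ℝ) : ℂ) * Complex.I)) ^ N with hG
  have hGexp : ∀ τ, G τ = ∑ m ∈ M, ((Cr m : ℝ) : ℂ) *
      Complex.exp (((Sf m * τ - Th m : ℝ) : ℂ) * Complex.I) := by
    intro τ
    rw [hG]
    simp only
    rw [G_expand]
    refine Finset.sum_congr rfl fun m hm => ?_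
    have harg : (∑ j, (m j : ℝ) * (lam j * τ - θ j)) = Sf m * τ - Th m := by
      rw [hSf, hTh]
      simp only [Finset.sum_mul, mul_sub]
      rw [← Finset.sum_sub_distrib]
      exact Finset.sum_congr rfl fun j _ => by ring
    rw [harg, hCr]
    push_cast
    ring
  have hprod : ∀ τ, ((Complex.normSq (G τ) : ℝ) : ℂ)
      = ∑ p ∈ M ×ˢ M, ((Cr p.1 * Cr p.2 : ℝ) : ℂ) *
          Complex.exp ((((Sf p.1 - Sf p.2) * τ - (Th p.1 - Th p.2) : ℝ) : ℂ) * Complex.I) := by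
    intro τ
    rw [← Complex.mul_conj (G τ), hGexp τ, map_sum, Finset.sum_mul_sum, ← Finset.sum_product']
    refine Finset.sum_congr rfl fun p hp => ?_
    rw [map_mul, Complex.conj_ofReal, ← Complex.exp_conj]
    rw [show (starRingEnd ℂ) (((Sf p.2 * τ - Th p.2 : ℝ) : ℂ) * Complex.I)
        = ((-(Sf p.2 * τ - Th p.2) : ℝ) : ℂ) * Complex.I by
      rw [map_mul, Complex.conj_ofReal, Complex.conj_I]; push_cast; ring]
    rw [mul_mul_mul_comm, ← Complex.exp_add]
    push_cast
    ring_nf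
  set J : ℝ → ℝ := fun T => ∫ τ in d..T, Complex.normSq (G τ) with hJ
  have hint : ∀ T : ℝ, ((J T : ℝ) : ℂ)
      = ∑ p ∈ M ×ˢ M, ((Cr p.1 * Cr p.2 : ℝ) : ℂ) *
          ∫ τ in d..T, Complex.exp ((((Sf p.1 - Sf p.2) * τ - (Th p.1 - Th p.2) : ℝ) : ℂ)
            * Complex.I) := by
    intro T
    rw [hJ]
    simp only
    rw [ofReal_intervalIntegral]
    calc (∫ τ in d..T, ((Complex.normSq (G τ) : ℝ) : ℂ))
        = ∫ τ in d..T, ∑ p ∈ M ×ˢ M, ((Cr p.1 * Cr p.2 : ℝ) : ℂ) *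
            Complex.exp ((((Sf p.1 - Sf p.2) * τ - (Th p.1 - Th p.2) : ℝ) : ℂ) * Complex.I) := by
          refine intervalIntegral.integral_congr fun τ _ => ?_
          exact hprod τ
      _ = _ := by
          rw [intervalIntegral.integral_finset_sum]
          · exact Finset.sum_congr rfl fun p hp => intervalIntegral.integral_const_mul _ _
          · intro p hp
            exact (continuous_const.mul (exp_cont (Sf p.1 - Sf p.2) (Th p.1 - Th p.2))).intervalIntegrable _ _
  set P : Finset ((Fin n → ℕ) × (Fin n → ℕ)) := (M ×ˢ M).filter fun p => Sf p.1 = Sf p.2 with hP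
  set A0 : ℝ := ∑ p ∈ P, Cr p.1 * Cr p.2 with hA0
  set K : ℝ := ∑ p ∈ (M ×ˢ M).filter (fun p => ¬ Sf p.1 = Sf p.2),
      Cr p.1 * Cr p.2 * (2 / |Sf p.1 - Sf p.2|) with hK
  have hK0 : 0 ≤ K :=
    Finset.sum_nonneg fun p _ => mul_nonneg (mul_nonneg (hCr0 _) (hCr0 _)) (by positivity)
  have hJlow : ∀ T : ℝ, A0 * (T - d) - K ≤ J T := by
    intro T
    have h1 : J T = ∑ p ∈ M ×ˢ M, (((Cr p.1 * Cr p.2 : ℝ) : ℂ) *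
        ∫ τ in d..T, Complex.exp ((((Sf p.1 - Sf p.2) * τ - (Th p.1 - Th p.2) : ℝ) : ℂ)
          * Complex.I)).re := by
      have h2 := congrArg Complex.re (hint T)
      rw [Complex.ofReal_re, Complex.re_sum] at h2
      exact h2
    rw [h1, ← Finset.sum_filter_add_sum_filter_not (M ×ˢ M) (fun p => Sf p.1 = Sf p.2), ← hP]
    have hPsum : ∑ p ∈ P, (((Cr p.1 * Cr p.2 : ℝ) : ℂ) *
        ∫ τ in d..T, Complex.exp ((((Sf p.1 - Sf p.2) * τ - (Th p.1 - Th p.2) : ℝ) : ℂ)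
          * Complex.I)).re = A0 * (T - d) := by
      rw [hA0, Finset.sum_mul]
      refine Finset.sum_congr rfl fun p hp => ?_
      have hps : Sf p.1 = Sf p.2 := by
        have := (Finset.mem_filter.mp (hP ▸ hp)).2
        exact this
      have hth : Th p.1 = Th p.2 := hlin _ _ hps
      have hfun : (fun τ : ℝ => Complex.exp ((((Sf p.1 - Sf p.2) * τ
          - (Th p.1 - Th p.2) : ℝ) : ℂ) * Complex.I)) = fun τ : ℝ => (1 : ℂ) := by
        funext τ
        rw [hps, hth]
        norm_num
      rw [hfun, intervalIntegral.integral_const]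
      simp [Complex.real_smul, ← Complex.ofReal_mul]
    rw [hPsum]
    have hQsum : -K ≤ ∑ p ∈ (M ×ˢ M).filter (fun p => ¬ Sf p.1 = Sf p.2),
        (((Cr p.1 * Cr p.2 : ℝ) : ℂ) *
        ∫ τ in d..T, Complex.exp ((((Sf p.1 - Sf p.2) * τ - (Th p.1 - Th p.2) : ℝ) : ℂ)
          * Complex.I)).re := by
      rw [hK, ← Finset.sum_neg_distrib]
      refine Finset.sum_le_sum fun p hp => ?_
      have hne : Sf p.1 - Sf p.2 ≠ 0 := by
        have := (Finset.mem_filter.mp hp).2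
        intro hzero
        exact this (by linarith [sub_eq_zero.mp hzero])
      calc -(Cr p.1 * Cr p.2 * (2 / |Sf p.1 - Sf p.2|))
          ≤ -‖((Cr p.1 * Cr p.2 : ℝ) : ℂ) *
              ∫ τ in d..T, Complex.exp ((((Sf p.1 - Sf p.2) * τ
                - (Th p.1 - Th p.2) : ℝ) : ℂ) * Complex.I)‖ := by
            rw [neg_le_neg_iff, norm_mul, Complex.norm_real, Real.norm_eq_abs,
              _root_.abs_of_nonneg (mul_nonneg (hCr0 _) (hCr0 _))]
            exact mul_le_mul_of_nonneg_left
              (exp_integral_ne _ _ _ _ hne) (mul_nonneg (hCr0 _) (hCr0 _))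
        _ ≤ _ := (abs_le.mp (Complex.abs_re_le_norm _)).1
    linarith
  set U : ℝ := (2 + 2 * c) ^ N * 4 ^ (N * (n - 1)) with hU
  have hGnormSq : ∀ τ, Complex.normSq (G τ)
      = ∏ j, (2 + 2 * Real.cos (lam j * τ - θ j)) ^ N := by
    intro τ
    rw [hG]
    simp only
    rw [map_prod]
    exact Finset.prod_congr rfl fun j _ => by rw [map_pow, normSq_one_add_exp]
  have h2c0 : (0:ℝ) ≤ 2 + 2 * c := by linarith
  have hbound : ∀ τ, d < τ → Complex.normSq (G τ) ≤ U := by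
    intro τ hτ
    obtain ⟨j, hj⟩ := hcon τ hτ
    have hj' : Real.cos (lam j * τ - θ j) ≤ c := hj
    rw [hGnormSq, ← Finset.mul_prod_erase _ _ (Finset.mem_univ j), hU]
    have hc4 : ∀ j' : Fin n, (0:ℝ) ≤ 2 + 2 * Real.cos (lam j' * τ - θ j') := fun j' => by
      nlinarith [Real.neg_one_le_cos (lam j' * τ - θ j')]
    have hc4' : ∀ j' : Fin n, (2 + 2 * Real.cos (lam j' * τ - θ j')) ≤ 4 := fun j' => by
      nlinarith [Real.cos_le_one (lam j' * τ - θ j')]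
    refine mul_le_mul (pow_le_pow_left₀ (hc4 j) (by linarith) N) ?_
      (Finset.prod_nonneg fun j' _ => pow_nonneg (hc4 j') N) (pow_nonneg h2c0 N)
    calc ∏ j' ∈ Finset.univ.erase j, (2 + 2 * Real.cos (lam j' * τ - θ j')) ^ N
        ≤ ∏ j' ∈ Finset.univ.erase j, (4:ℝ) ^ N :=
          Finset.prod_le_prod (fun j' _ => pow_nonneg (hc4 j') N)
            (fun j' _ => pow_le_pow_left₀ (hc4 j') (hc4' j') N)
      _ = 4 ^ (N * (n - 1)) := by
          rw [Finset.prod_const, ← pow_mul]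
          congr 1
          rw [Finset.card_erase_of_mem (Finset.mem_univ j), Finset.card_univ, Fintype.card_fin]
  have hcontG : Continuous fun τ => Complex.normSq (G τ) := by
    rw [hG]
    refine Complex.continuous_normSq.comp (continuous_finset_prod _ fun j _ => ?_)
    exact (continuous_const.add (Complex.continuous_exp.comp (by fun_prop))).pow N
  have hJup : ∀ T : ℝ, d < T → J T ≤ U * (T - d) := by
    intro T hT
    rw [hJ]
    simp only
    rw [intervalIntegral.integral_of_le hT.le]
    calc (∫ τ in Set.Ioc d T, Complex.normSq (G τ))
        ≤ ∫ _ in Set.Ioc d T, U := by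
          refine MeasureTheory.setIntegral_mono_on hcontG.integrableOn_Ioc
            (MeasureTheory.integrableOn_const measure_Ioc_lt_top.ne)
            measurableSet_Ioc fun τ hτ => hbound τ hτ.1
      _ = U * (T - d) := by
          rw [MeasureTheory.setIntegral_const, Real.volume_real_Ioc,
            max_eq_left (by linarith), smul_eq_mul, mul_comm]
  set m0 : Fin n → ℕ := fun _ => L with hm0
  have hm0M : m0 ∈ M := by
    rw [hM]
    refine Fintype.mem_piFinset.mpr fun j => ?_
    simp only [hm0]
    rw [Finset.mem_range, hN]
    omega
  have hm0P : (m0, m0) ∈ P := by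
    rw [hP]
    exact Finset.mem_filter.mpr ⟨Finset.mem_product.mpr ⟨hm0M, hm0M⟩, rfl⟩
  have hCrm0 : Cr m0 = (Nat.centralBinom L : ℝ) ^ n := by
    rw [hCr]
    simp only [hm0]
    rw [Finset.prod_const, Finset.card_univ, Fintype.card_fin,
      Nat.centralBinom_eq_two_mul_choose, ← hN]
  have hsingle : Cr m0 * Cr m0 ≤ A0 := by
    rw [hA0]
    exact Finset.single_le_sum (f := fun p => Cr p.1 * Cr p.2)
      (fun p _ => mul_nonneg (hCr0 _) (hCr0 _)) hm0P
  have hA0low : (Nat.centralBinom L : ℝ) ^ (2 * n) ≤ A0 := by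
    calc (Nat.centralBinom L : ℝ) ^ (2 * n) = Cr m0 * Cr m0 := by
          rw [hCrm0, ← pow_add, two_mul]
      _ ≤ A0 := hsingle
  have hcb0 : (0:ℝ) < Nat.centralBinom L := by exact_mod_cast Nat.centralBinom_pos L
  have h4L : (4:ℝ) ^ L ≤ 2 * L * Nat.centralBinom L := by
    exact_mod_cast Nat.four_pow_le_two_mul_self_mul_centralBinom L hL1
  have hkey : s ^ (2 * L) * (2 * (L:ℝ)) ^ (2 * n) < 1 := by
    have h1 : s ^ (2 * L) = (s ^ 2) ^ L := by rw [← pow_mul]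
    have h2 : (2 * (L:ℝ)) ^ (2 * n) = 4 ^ n * (L:ℝ) ^ (2 * n) := by
      rw [mul_pow]
      congr 1
      rw [pow_mul]
      norm_num
    rw [h1, h2]
    calc (s ^ 2) ^ L * (4 ^ n * (L:ℝ) ^ (2 * n))
        = 4 ^ n * ((L:ℝ) ^ (2 * n) * (s ^ 2) ^ L) := by ring
      _ < 4 ^ n * (1 / 4 ^ n) := mul_lt_mul_of_pos_left hLs (by positivity)
      _ = 1 := by field_simp
  have hUlt : U < A0 := by
    have hUeq : U = s ^ (2 * L) * (4 ^ L) ^ (2 * n) := by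
      have h2c : (2 + 2 * c) = 4 * s := by rw [hs]; ring
      have hexp : 2 * L + 2 * L * (n - 1) = L * (2 * n) := by
        calc 2 * L + 2 * L * (n - 1) = 2 * L * ((n - 1) + 1) := by ring
          _ = L * (2 * n) := by rw [Nat.sub_add_cancel hn0]; ring
      calc U = (4 * s) ^ (2 * L) * 4 ^ (2 * L * (n - 1)) := by rw [hU, hN, h2c]
        _ = s ^ (2 * L) * ((4:ℝ) ^ (2 * L) * 4 ^ (2 * L * (n - 1))) := by rw [mul_pow]; ring
        _ = s ^ (2 * L) * 4 ^ (2 * L + 2 * L * (n - 1)) := by rw [pow_add]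
        _ = s ^ (2 * L) * (4 ^ L) ^ (2 * n) := by rw [hexp, pow_mul, pow_mul, ← pow_mul]
    calc U = s ^ (2 * L) * (4 ^ L) ^ (2 * n) := hUeq
      _ ≤ s ^ (2 * L) * (2 * (L:ℝ) * Nat.centralBinom L) ^ (2 * n) := by
          refine mul_le_mul_of_nonneg_left (pow_le_pow_left₀ (by positivity) h4L _)
            (pow_nonneg hs0 _)
      _ = (s ^ (2 * L) * (2 * (L:ℝ)) ^ (2 * n)) * (Nat.centralBinom L : ℝ) ^ (2 * n) := by
          rw [mul_pow]
          ring
      _ < 1 * (Nat.centralBinom L : ℝ) ^ (2 * n) :=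
          mul_lt_mul_of_pos_right hkey (by positivity)
      _ = (Nat.centralBinom L : ℝ) ^ (2 * n) := one_mul _
      _ ≤ A0 := hA0low
  have hU0 : (0:ℝ) ≤ U := by
    rw [hU]
    exact mul_nonneg (pow_nonneg h2c0 _) (by positivity)
  have hAU : 0 < A0 - U := by linarith
  set T : ℝ := d + (K + 1) / (A0 - U) with hT
  have hTd : d < T := by
    rw [hT]
    have := div_pos (show (0:ℝ) < K + 1 by linarith) hAU
    linarith
  have h1 := hJlow T
  have h2 := hJup T hTd
  have h3 : (A0 - U) * (T - d) ≤ K := by nlinarith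
  have h5 : T - d = (K + 1) / (A0 - U) := by rw [hT]; ring
  rw [h5, mul_div_cancel₀ _ (ne_of_gt hAU)] at h3
  linarith

lemma normSq_exp_sub_one (x : ℝ) :
    Complex.normSq (Complex.exp ((x : ℂ) * Complex.I) - 1) = 2 - 2 * Real.cos x := by
  rw [Complex.normSq_apply]
  simp only [Complex.sub_re, Complex.sub_im, Complex.one_re, Complex.one_im,
    Complex.exp_ofReal_mul_I_re, Complex.exp_ofReal_mul_I_im]
  nlinarith [Real.sin_sq_add_cos_sq x]

theorem exists_tau_gt_of_equiv
    (n : ℕ) (lam : Fin n → ℝ) (hlam : Function.Injective lam)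
    (a b : Fin n → ℂ)
    (h : ∃ ψ : ℝ →ₗ[ℚ] ℝ, ∀ j, b j = a j * Complex.exp (Complex.I * (ψ (lam j) : ℂ)))
    (d ε : ℝ) (hd : 0 < d) (hε : 0 < ε) :
    ∃ τ : ℝ, d < τ ∧
      ∑ j, ‖a j * Complex.exp (Complex.I * (lam j * τ : ℝ)) - b j‖ < ε := by
  obtain ⟨ψ, hψ⟩ := h
  set A : ℝ := ∑ j, ‖a j‖ with hA
  have hA0 : 0 ≤ A := Finset.sum_nonneg fun j _ => norm_nonneg _
  set ε' : ℝ := min (ε / (A + 1)) 1 with hε'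
  have hε'0 : 0 < ε' := lt_min (div_pos hε (by linarith)) one_pos
  have hε'1 : ε' ≤ 1 := min_le_right _ _
  set c : ℝ := 1 - ε' ^ 2 / 2 with hc
  obtain ⟨τ, hτd, hτ⟩ := kron n lam ψ d c (by rw [hc]; nlinarith) (by rw [hc]; nlinarith)
  refine ⟨τ, hτd, ?_⟩
  have hterm : ∀ j : Fin n, ‖a j * Complex.exp (Complex.I * ((lam j * τ : ℝ) : ℂ)) - b j‖
      ≤ ‖a j‖ * ε' := by
    intro j
    rw [hψ j]
    have hfac : a j * Complex.exp (Complex.I * ((lam j * τ : ℝ) : ℂ))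
        - a j * Complex.exp (Complex.I * ((ψ (lam j) : ℝ) : ℂ))
        = a j * Complex.exp (Complex.I * ((ψ (lam j) : ℝ) : ℂ))
          * (Complex.exp (((lam j * τ - ψ (lam j) : ℝ) : ℂ) * Complex.I) - 1) := by
      rw [mul_assoc, mul_sub, mul_one, mul_sub]
      congr 2
      rw [← Complex.exp_add]
      congr 1
      push_cast
      ring
    rw [hfac, norm_mul, norm_mul]
    have h1 : ‖Complex.exp (Complex.I * ((ψ (lam j) : ℝ) : ℂ))‖ = 1 := by
      rw [mul_comm]
      exact Complex.norm_exp_ofReal_mul_I _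
    rw [h1, mul_one]
    refine mul_le_mul_of_nonneg_left ?_ (norm_nonneg _)
    have hcos := hτ j
    have hsq : ‖Complex.exp (((lam j * τ - ψ (lam j) : ℝ) : ℂ) * Complex.I) - 1‖ ^ 2
        ≤ ε' ^ 2 := by
      rw [Complex.sq_norm, normSq_exp_sub_one]
      rw [hc] at hcos
      nlinarith
    exact le_of_pow_le_pow_left₀ two_ne_zero hε'0.le hsq
  calc ∑ j, ‖a j * Complex.exp (Complex.I * ((lam j * τ : ℝ) : ℂ)) - b j‖
      ≤ ∑ j, ‖a j‖ * ε' := Finset.sum_le_sum fun j _ => hterm j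
    _ = A * ε' := by rw [hA, Finset.sum_mul]
    _ ≤ A * (ε / (A + 1)) := mul_le_mul_of_nonneg_left (min_le_left _ _) hA0
    _ < ε := by
        rw [mul_div_assoc', div_lt_iff₀ (by linarith)]
        nlinarith
end

section
/- Let Λ = {λ₁,…,λₙ} be a finite set of distinct real exponents and let G be an equivalence class under ∼* in the set of trigonometric polynomials with exponents in Λ. Then G is sequentially compact with respect to uniform convergence on ℝ: every sequence of trigonometric polynomials in G has a subsequence converging uniformly on ℝ to a trigonometric polynomial in G. -/
open Complex Filter Topology

/-- Equivalence classes of trigonometric polynomials with a fixed finite set of exponents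
are sequentially compact for uniform convergence on ℝ. -/
theorem equivalence_class_seq_compact
    (n : ℕ) (lam : Fin n → ℝ) (hlam : Function.Injective lam)
    (c : Fin n → ℂ) (a : ℕ → Fin n → ℂ)
    (ha : ∀ m, ∃ ψ : ℝ →ₗ[ℚ] ℝ, ∀ j,
      a m j = c j * Complex.exp (Complex.I * (ψ (lam j) : ℂ))) :
    ∃ (b : Fin n → ℂ) (φ : ℕ → ℕ), StrictMono φ ∧
      (∃ ψ : ℝ →ₗ[ℚ] ℝ, ∀ j, b j = c j * Complex.exp (Complex.I * (ψ (lam j) : ℂ))) ∧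
      TendstoUniformly
        (fun m t => ∑ j, a (φ m) j * Complex.exp (Complex.I * (lam j * t : ℝ)))
        (fun t => ∑ j, b j * Complex.exp (Complex.I * (lam j * t : ℝ)))
        Filter.atTop := by
  classical
  choose ψm hψm using ha
  set V : Submodule ℚ ℝ := Submodule.span ℚ (Set.range lam) with hVdef
  have hfin : FiniteDimensional ℚ V :=
    FiniteDimensional.span_of_finite ℚ (Set.finite_range lam)
  set r := Module.finrank ℚ V with hr
  let e : Module.Basis (Fin r) ℚ V := Module.finBasis ℚ V
  have hmem : ∀ j, lam j ∈ V := fun j => Submodule.subset_span ⟨j, rfl⟩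
  set q : Fin n → Fin r → ℚ := fun j k => e.equivFun ⟨lam j, hmem j⟩ k with hq
  -- representation of lam j
  have hrepr : ∀ j, lam j = ∑ k, q j k • (e k : ℝ) := by
    intro j
    have h := congrArg (Subtype.val) (e.sum_equivFun ⟨lam j, hmem j⟩)
    simp only [Submodule.coe_sum, Submodule.coe_smul] at h
    exact h.symm
  have hψval : ∀ (ψ : ℝ →ₗ[ℚ] ℝ) j, ψ (lam j) = ∑ k, (q j k : ℝ) * ψ (e k) := by
    intro ψ j
    rw [hrepr j, map_sum]
    exact Finset.sum_congr rfl fun k _ => by rw [map_smul, Rat.smul_def]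
  -- common denominator
  set D : ℕ := ∏ j, ∏ k, (q j k).den with hDdef
  have hDpos : 0 < D :=
    Finset.prod_pos fun j _ => Finset.prod_pos fun k _ => (q j k).pos
  have hDne : (D : ℝ) ≠ 0 := Nat.cast_ne_zero.mpr hDpos.ne'
  have hden : ∀ j k, (q j k).den ∣ D := fun j k =>
    (Finset.dvd_prod_of_mem (fun k => (q j k).den) (Finset.mem_univ k)).trans
      (Finset.dvd_prod_of_mem (fun j => ∏ k, (q j k).den) (Finset.mem_univ j))
  have hpex : ∀ j k, ∃ p : ℤ, q j k * (D : ℚ) = (p : ℚ) := by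
    intro j k
    obtain ⟨t, ht⟩ := hden j k
    refine ⟨(q j k).num * t, ?_⟩
    rw [ht]
    push_cast
    rw [← mul_assoc, Rat.mul_den_eq_num]
  choose p hpeq using hpex
  have hcast : ∀ j k, (q j k : ℝ) * (D : ℝ) = (p j k : ℝ) := by
    intro j k
    exact_mod_cast congrArg (fun x : ℚ => (x : ℝ)) (hpeq j k)
  -- phases on the torus
  set u : ℕ → Fin r → ℝ := fun m k => ψm m (e k) / D with hu
  set w : ℕ → Fin r → ℂ := fun m k => Complex.exp (I * u m k) with hwdef
  have hw1 : ∀ m k, ‖w m k‖ = 1 := by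
    intro m k; simp [hwdef, Complex.norm_exp]
  have hs : IsCompact (Set.univ.pi fun _ : Fin r => Metric.sphere (0:ℂ) 1) :=
    isCompact_univ_pi fun _ => isCompact_sphere 0 1
  have hmemw : ∀ m, w m ∈ Set.univ.pi fun _ : Fin r => Metric.sphere (0:ℂ) 1 := by
    intro m
    rw [Set.mem_univ_pi]
    intro k
    simp [Complex.dist_eq, hw1]
  obtain ⟨z, hzs, φ, hφ, hconv⟩ := hs.tendsto_subseq hmemw
  have hz1 : ∀ k, ‖z k‖ = 1 := by
    intro k
    have := hzs k (Set.mem_univ k)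
    simpa [Complex.dist_eq] using this
  have hz0 : ∀ k, z k ≠ 0 := by
    intro k h
    have := hz1 k
    rw [h] at this
    simp at this
  set y : Fin r → ℝ := fun k => (z k).arg with hy
  have hzy : ∀ k, z k = Complex.exp (I * y k) := by
    intro k
    conv_lhs => rw [← Complex.norm_mul_exp_arg_mul_I (z k)]
    rw [hz1 k, Complex.ofReal_one, one_mul, mul_comm]
  -- build ψ
  obtain ⟨W, hW⟩ := Submodule.exists_isCompl V
  set f : V →ₗ[ℚ] ℝ := e.constr ℚ (fun k => (D : ℝ) * y k) with hf
  set ψ : ℝ →ₗ[ℚ] ℝ := f.comp (V.linearProjOfIsCompl W hW) with hψdef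
  have hψlam : ∀ j, ψ (lam j) = ∑ k, (p j k : ℝ) * y k := by
    intro j
    have h0 : ψ (lam j) = f (V.linearProjOfIsCompl W hW ((⟨lam j, hmem j⟩ : V) : ℝ)) := rfl
    rw [h0, show V.linearProjOfIsCompl W hW ((⟨lam j, hmem j⟩ : V) : ℝ) = ⟨lam j, hmem j⟩ from
      Submodule.linearProjOfIsCompl_apply_left hW ⟨lam j, hmem j⟩, hf,
      Module.Basis.constr_apply_fintype]
    refine Finset.sum_congr rfl fun k _ => ?_
    rw [Rat.smul_def, ← mul_assoc]
    rw [show e.equivFun ⟨lam j, hmem j⟩ k = q j k from rfl, hcast j k]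
  -- phase product formulas
  have hDu : ∀ m k, ψm m (e k) = (D : ℝ) * u m k := by
    intro m k; rw [hu]; field_simp
  have hphase : ∀ m j, Complex.exp (I * (ψm m (lam j) : ℂ)) = ∏ k, (w m k) ^ (p j k) := by
    intro m j
    have h1 : ψm m (lam j) = ∑ k, (p j k : ℝ) * u m k := by
      rw [hψval (ψm m) j]
      exact Finset.sum_congr rfl fun k _ => by rw [hDu m k, ← mul_assoc, hcast j k]
    rw [h1]
    push_cast
    rw [Finset.mul_sum, Complex.exp_sum]
    refine Finset.prod_congr rfl fun k _ => ?_
    rw [show Complex.I * ((p j k : ℂ) * (u m k : ℝ)) = (p j k : ℂ) * (I * (u m k : ℝ)) by ring,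
      Complex.exp_int_mul]
  have hphaseb : ∀ j, Complex.exp (I * (ψ (lam j) : ℂ)) = ∏ k, (z k) ^ (p j k) := by
    intro j
    rw [hψlam j]
    push_cast
    rw [Finset.mul_sum, Complex.exp_sum]
    refine Finset.prod_congr rfl fun k _ => ?_
    rw [show Complex.I * ((p j k : ℂ) * (y k : ℝ)) = (p j k : ℂ) * (I * (y k : ℝ)) by ring,
      Complex.exp_int_mul, ← hzy k]
  set b : Fin n → ℂ := fun j => c j * Complex.exp (I * (ψ (lam j) : ℂ)) with hb
  refine ⟨b, φ, hφ, ⟨ψ, fun j => rfl⟩, ?_⟩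
  -- coefficientwise convergence
  have hcoef : ∀ j, Tendsto (fun m => a (φ m) j) atTop (𝓝 (b j)) := by
    intro j
    have h1 : ∀ m, a (φ m) j = c j * ∏ k, ((w ∘ φ) m k) ^ (p j k) := by
      intro m; rw [hψm (φ m) j, hphase (φ m) j]; rfl
    have h2 : b j = c j * ∏ k, (z k) ^ (p j k) := by
      show c j * Complex.exp (I * (ψ (lam j) : ℂ)) = _
      rw [hphaseb j]
    have h3 : Tendsto (fun m => c j * ∏ k, ((w ∘ φ) m k) ^ (p j k)) atTop
        (𝓝 (c j * ∏ k, (z k) ^ (p j k))) := by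
      refine tendsto_const_nhds.mul (tendsto_finset_prod _ fun k _ => ?_)
      exact (tendsto_pi_nhds.mp hconv k).zpow₀ (p j k) (Or.inl (hz0 k))
    rw [funext h1, h2]
    exact h3
  -- uniform convergence
  have hsum0 : Tendsto (fun m => ∑ j, dist (b j) (a (φ m) j)) atTop (𝓝 0) := by
    have h : ∀ j, Tendsto (fun m => dist (b j) (a (φ m) j)) atTop (𝓝 0) := by
      intro j
      have := tendsto_iff_dist_tendsto_zero.mp (hcoef j)
      simpa [dist_comm] using this
    simpa using tendsto_finset_sum Finset.univ (fun j _ => h j)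
  rw [Metric.tendstoUniformly_iff]
  intro ε hε
  filter_upwards [hsum0.eventually (gt_mem_nhds hε)] with m hm t
  have hE : ∀ x : ℝ, ‖Complex.exp (I * (x : ℂ))‖ = 1 := by
    intro x; simp [Complex.norm_exp]
  calc dist (∑ j, b j * Complex.exp (I * ((lam j * t : ℝ) : ℂ)))
        (∑ j, a (φ m) j * Complex.exp (I * ((lam j * t : ℝ) : ℂ)))
      = ‖∑ j, (b j - a (φ m) j) * Complex.exp (I * ((lam j * t : ℝ) : ℂ))‖ := by
        rw [dist_eq_norm, ← Finset.sum_sub_distrib]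
        congr 1
        exact Finset.sum_congr rfl fun j _ => (sub_mul _ _ _).symm
    _ ≤ ∑ j, ‖(b j - a (φ m) j) * Complex.exp (I * ((lam j * t : ℝ) : ℂ))‖ :=
        norm_sum_le _ _
    _ = ∑ j, dist (b j) (a (φ m) j) := by
        refine Finset.sum_congr rfl fun j _ => ?_
        rw [norm_mul, hE, mul_one, dist_eq_norm]
    _ < ε := hm
end

section
/- Let f₁, f₂ be equivalent trigonometric polynomials with the same distinct real exponents {λ₁,…,λₙ}. Then there exists an increasing unbounded sequence (τ_m) of positive reals such that f₁(· + τ_m) converges uniformly on ℝ to f₂. In particular, every function equivalent to f₁ is a limit of translates of f₁. -/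
open Complex Finset Filter

noncomputable section

namespace KronHelper

lemma exp_I_real (x : ℝ) :
    Complex.exp (Complex.I * x) = (Real.cos x : ℂ) + (Real.sin x : ℂ) * Complex.I := by
  rw [mul_comm, Complex.exp_mul_I, Complex.ofReal_cos, Complex.ofReal_sin]

lemma abs_exp_sub_exp_sq (x y : ℝ) :
    (‖Complex.exp (Complex.I * x) - Complex.exp (Complex.I * y)‖) ^ 2
      = 2 - 2 * Real.cos (x - y) := by
  rw [exp_I_real, exp_I_real, Complex.sq_norm, Complex.normSq_apply]
  simp only [Complex.sub_re, Complex.add_re, Complex.mul_re, Complex.I_re, Complex.I_im,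
    Complex.ofReal_re, Complex.ofReal_im, Complex.sub_im, Complex.add_im, Complex.mul_im]
  rw [Real.cos_sub]
  nlinarith [Real.sin_sq_add_cos_sq x, Real.sin_sq_add_cos_sq y]

lemma two_add_exp (x : ℝ) :
    2 + Complex.exp (Complex.I * x) + Complex.exp (-(Complex.I * x))
      = ((2 + 2 * Real.cos x : ℝ) : ℂ) := by
  have h : -(Complex.I * (x : ℂ)) = Complex.I * ((-x : ℝ) : ℂ) := by push_cast; ring
  rw [h, exp_I_real, exp_I_real, Real.cos_neg, Real.sin_neg]
  push_cast; ring

lemma factor_expand (N : ℕ) (x : ℝ) :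
    (2 + Complex.exp (Complex.I * x) + Complex.exp (-(Complex.I * x))) ^ N
      = ∑ k ∈ Finset.range (2 * N + 1),
          (Nat.choose (2 * N) k : ℂ) * Complex.exp (Complex.I * x) ^ (((k : ℤ) - (N : ℤ))) := by
  set u : ℂ := Complex.exp (Complex.I * x) with hu_def
  have hu : u ≠ 0 := Complex.exp_ne_zero _
  have h1 : 2 + u + Complex.exp (-(Complex.I * x)) = (u + 1) ^ 2 * u⁻¹ := by
    rw [Complex.exp_neg, ← hu_def]
    field_simp
    ring
  rw [h1, mul_pow, ← pow_mul, add_pow, Finset.sum_mul]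
  refine Finset.sum_congr rfl fun k hk => ?_
  rw [one_pow, mul_one, zpow_sub₀ hu, zpow_natCast, zpow_natCast, inv_pow]
  ring

lemma kron {n : ℕ} (lam θ : Fin n → ℝ)
    (hrel : ∀ m : Fin n → ℤ, ∑ j, (m j : ℝ) * lam j = 0 → ∑ j, (m j : ℝ) * θ j = 0)
    {ε : ℝ} (hε : 0 < ε) (hε1 : ε ≤ 1) (M : ℝ) :
    ∃ τ : ℝ, M ≤ τ ∧ ∀ j,
      ‖Complex.exp (Complex.I * (lam j * τ : ℝ)) -
        Complex.exp (Complex.I * (θ j : ℝ))‖ < ε := by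
  by_contra hcon
  push_neg at hcon
  have hε2 : ε ^ 2 ≤ 1 := by nlinarith
  have hε2' : 0 < ε ^ 2 := by positivity
  set c : ℝ := 1 - ε ^ 2 / 4 with hc_def
  have hc0 : 0 ≤ c := by rw [hc_def]; linarith
  have hc1 : c < 1 := by rw [hc_def]; linarith
  obtain ⟨N, hNlt, hN1⟩ : ∃ N : ℕ, (2 * (N : ℝ)) ^ n * c ^ N < 1 ∧ 1 ≤ N := by
    have h2 : Filter.Tendsto (fun N : ℕ => (2 * (N : ℝ)) ^ n * c ^ N)
        Filter.atTop (nhds 0) := by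
      have h3 := (tendsto_pow_const_mul_const_pow_of_lt_one n hc0 hc1).const_mul ((2:ℝ) ^ n)
      rw [mul_zero] at h3
      exact h3.congr (fun N => by rw [mul_pow]; ring)
    exact ((h2.eventually (eventually_lt_nhds one_pos)).and (eventually_ge_atTop 1)).exists
  -- notation
  set R : Finset (Fin n → ℕ) := Fintype.piFinset (fun _ : Fin n => Finset.range (2 * N + 1))
    with hR_def
  set L : (Fin n → ℕ) → ℝ := fun r => ∑ j, (((r j : ℤ) - (N : ℤ) : ℤ) : ℝ) * lam j with hL_def
  set A : (Fin n → ℕ) → ℝ := fun r => ∑ j, (((r j : ℤ) - (N : ℤ) : ℤ) : ℝ) * θ j with hA_def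
  set Cr : (Fin n → ℕ) → ℝ := fun r => ∏ j, (Nat.choose (2 * N) (r j) : ℝ) with hCr_def
  have hCr_nonneg : ∀ r, 0 ≤ Cr r := fun r => Finset.prod_nonneg fun j _ => by positivity
  set coeff : (Fin n → ℕ) → ℂ := fun r =>
    ((Cr r : ℝ) : ℂ) * Complex.exp (-(Complex.I * ((A r : ℝ) : ℂ))) with hcoeff_def
  set Pc : ℝ → ℂ := fun t =>
    ∏ j, (2 + Complex.exp (Complex.I * ((lam j * t - θ j : ℝ) : ℂ)) +
      Complex.exp (-(Complex.I * ((lam j * t - θ j : ℝ) : ℂ)))) ^ N with hPc_def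
  set B : ℝ := ∑ r ∈ R, Cr r * (2 / |L r|) with hB_def
  have hB0 : 0 ≤ B := Finset.sum_nonneg fun r _ => mul_nonneg (hCr_nonneg r) (by positivity)
  -- expansion of Pc
  have hPc : ∀ t : ℝ, Pc t = ∑ r ∈ R, coeff r * Complex.exp (Complex.I * ((L r : ℝ) : ℂ) * t) := by
    intro t
    simp only [hPc_def]
    rw [Finset.prod_congr rfl (fun j (_ : j ∈ Finset.univ) => factor_expand N (lam j * t - θ j)),
      Finset.prod_univ_sum]
    refine Finset.sum_congr rfl fun r hr => ?_
    rw [Finset.prod_mul_distrib]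
    have h2 : ∀ j : Fin n,
        Complex.exp (Complex.I * ((lam j * t - θ j : ℝ) : ℂ)) ^ ((r j : ℤ) - (N : ℤ))
          = Complex.exp ((((r j : ℤ) - (N : ℤ) : ℤ) : ℂ) *
              (Complex.I * ((lam j * t - θ j : ℝ) : ℂ))) :=
      fun j => (Complex.exp_int_mul _ _).symm
    rw [Finset.prod_congr rfl (fun j _ => h2 j), ← Complex.exp_sum]
    have hsum : (∑ j, ((((r j : ℤ) - (N : ℤ) : ℤ) : ℂ) *
        (Complex.I * ((lam j * t - θ j : ℝ) : ℂ))))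
        = Complex.I * ((L r * t - A r : ℝ) : ℂ) := by
      simp only [hL_def, hA_def]
      push_cast
      rw [mul_sub, Finset.sum_mul, Finset.mul_sum, Finset.mul_sum, ← Finset.sum_sub_distrib]
      exact Finset.sum_congr rfl fun j _ => by ring
    rw [hsum, hcoeff_def]
    simp only []
    rw [mul_assoc, ← Complex.exp_add]
    congr 1
    · simp only [hCr_def]
      norm_cast
    · congr 1
      push_cast
      ring
  have hcont : ∀ r : Fin n → ℕ,
      Continuous (fun t : ℝ => coeff r * Complex.exp (Complex.I * ((L r : ℝ) : ℂ) * t)) := by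
    intro r
    exact continuous_const.mul
      (Complex.continuous_exp.comp (continuous_const.mul Complex.continuous_ofReal))
  have habs_exp_one : ∀ x : ℝ, ‖Complex.exp (-(Complex.I * (x : ℂ)))‖ = 1 := by
    intro x
    rw [Complex.norm_exp]
    simp
  have habs_exp_one' : ∀ x s : ℝ,
      ‖Complex.exp (Complex.I * (x : ℂ) * (s : ℂ))‖ = 1 := by
    intro x s
    rw [Complex.norm_exp]
    simp
  -- the key inequality, for every T ≥ M
  have key : ∀ T : ℝ, M ≤ T →
      ((Nat.choose (2 * N) N : ℝ) ^ n) * (T - M) - B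
        ≤ (4 : ℝ) ^ (n * N) * c ^ N * (T - M) := by
    intro T hT
    have hint_eq : (∫ t in M..T, Pc t) = ∑ r ∈ R, coeff r *
        ∫ t in M..T, Complex.exp (Complex.I * ((L r : ℝ) : ℂ) * ((t : ℝ) : ℂ)) := by
      rw [intervalIntegral.integral_congr
        (g := fun t : ℝ => ∑ r ∈ R, coeff r * Complex.exp (Complex.I * ((L r : ℝ) : ℂ) * t))
        (fun t _ => hPc t)]
      rw [intervalIntegral.integral_finset_sum
        (fun r _ => ((hcont r).intervalIntegrable M T))]
      exact Finset.sum_congr rfl fun r _ => intervalIntegral.integral_const_mul _ _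
    -- upper bound
    have hbound : (∫ t in M..T, Pc t).re ≤ (4 : ℝ) ^ (n * N) * c ^ N * (T - M) := by
      have hb : ∀ t ∈ Set.uIoc M T, ‖Pc t‖ ≤ (4 : ℝ) ^ (n * N) * c ^ N := by
        intro t ht
        rw [Set.uIoc_of_le hT] at ht
        have htM : M ≤ t := ht.1.le
        obtain ⟨j₀, hj₀⟩ := hcon t htM
        have hfac : ∀ j : Fin n,
            ‖(2 + Complex.exp (Complex.I * ((lam j * t - θ j : ℝ) : ℂ)) +
              Complex.exp (-(Complex.I * ((lam j * t - θ j : ℝ) : ℂ)))) ^ N‖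
            = (2 + 2 * Real.cos (lam j * t - θ j)) ^ N := by
          intro j
          rw [norm_pow, two_add_exp, Complex.norm_real, Real.norm_eq_abs,
            _root_.abs_of_nonneg (by nlinarith [Real.neg_one_le_cos (lam j * t - θ j)])]
        have hcos_le : ∀ j : Fin n, 2 + 2 * Real.cos (lam j * t - θ j) ≤ 4 := by
          intro j; nlinarith [Real.cos_le_one (lam j * t - θ j)]
        have hcos_ge : ∀ j : Fin n, 0 ≤ 2 + 2 * Real.cos (lam j * t - θ j) := by
          intro j; nlinarith [Real.neg_one_le_cos (lam j * t - θ j)]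
        have hbad_j : 2 + 2 * Real.cos (lam j₀ * t - θ j₀) ≤ 4 * c := by
          have h1 := abs_exp_sub_exp_sq (lam j₀ * t) (θ j₀)
          have h2 : ε ^ 2 ≤ 2 - 2 * Real.cos (lam j₀ * t - θ j₀) := by
            rw [← h1]
            nlinarith [norm_nonneg (Complex.exp (Complex.I * ((lam j₀ * t : ℝ) : ℂ)) -
              Complex.exp (Complex.I * ((θ j₀ : ℝ) : ℂ)))]
          rw [hc_def]; nlinarith
        have hn1 : 1 ≤ n := Nat.one_le_iff_ne_zero.2 (by rintro rfl; exact Fin.elim0 j₀)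
        obtain ⟨p, hp⟩ : ∃ p, n = p + 1 := ⟨n - 1, by omega⟩
        calc ‖Pc t‖
            = ∏ j, ‖(2 + Complex.exp (Complex.I * ((lam j * t - θ j : ℝ) : ℂ)) +
              Complex.exp (-(Complex.I * ((lam j * t - θ j : ℝ) : ℂ)))) ^ N‖ := by
              simp only [hPc_def]
              exact norm_prod _ _
          _ = ∏ j, (2 + 2 * Real.cos (lam j * t - θ j)) ^ N :=
              Finset.prod_congr rfl fun j _ => hfac j
          _ ≤ (4 * c) ^ N * ∏ j ∈ Finset.univ.erase j₀, (4 : ℝ) ^ N := by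
              rw [← Finset.mul_prod_erase Finset.univ _ (Finset.mem_univ j₀)]
              refine mul_le_mul (pow_le_pow_left₀ (hcos_ge j₀) hbad_j N)
                (Finset.prod_le_prod (fun j _ => pow_nonneg (hcos_ge j) N)
                  (fun j _ => pow_le_pow_left₀ (hcos_ge j) (hcos_le j) N))
                (Finset.prod_nonneg fun j _ => pow_nonneg (hcos_ge j) N) (by positivity)
          _ = (4 : ℝ) ^ (n * N) * c ^ N := by
              rw [Finset.prod_const]
              have hcard : (Finset.univ.erase j₀).card = p := by
                rw [Finset.card_erase_of_mem (Finset.mem_univ j₀), Finset.card_univ,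
                  Fintype.card_fin, hp]
                omega
              rw [hcard, mul_pow, hp]
              rw [show (p + 1) * N = N * (p + 1) from Nat.mul_comm _ _, pow_mul]
              ring
      have h11 : ‖∫ t in M..T, Pc t‖ ≤ (4 : ℝ) ^ (n * N) * c ^ N * |T - M| :=
        intervalIntegral.norm_integral_le_of_norm_le_const hb
      rw [_root_.abs_of_nonneg (by linarith : (0:ℝ) ≤ T - M)] at h11
      exact le_trans (Complex.re_le_norm _) h11
    -- lower bound
    have hlow : ((Nat.choose (2 * N) N : ℝ) ^ n) * (T - M) - B ≤ (∫ t in M..T, Pc t).re := by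
      rw [hint_eq, Complex.re_sum]
      have hterm : ∀ r ∈ R,
          (if L r = 0 then Cr r * (T - M) else 0) - Cr r * (2 / |L r|)
          ≤ (coeff r * ∫ t in M..T,
              Complex.exp (Complex.I * ((L r : ℝ) : ℂ) * ((t : ℝ) : ℂ))).re := by
        intro r _
        by_cases hLr : L r = 0
        · have hA0 : A r = 0 := by
            simp only [hA_def]
            refine hrel (fun j => (r j : ℤ) - N) ?_
            have h9 := hLr
            simp only [hL_def] at h9
            exact_mod_cast h9
          have hcoeffr : coeff r = ((Cr r : ℝ) : ℂ) := by
            simp only [hcoeff_def]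
            rw [hA0]
            simp
          have hintr : (∫ t in M..T,
              Complex.exp (Complex.I * ((L r : ℝ) : ℂ) * ((t : ℝ) : ℂ))) = ((T - M : ℝ) : ℂ) := by
            rw [hLr]
            simp only [Complex.ofReal_zero, mul_zero, zero_mul, Complex.exp_zero]
            rw [intervalIntegral.integral_const]
            simp [Complex.real_smul]
          rw [hcoeffr, hintr, if_pos hLr, ← Complex.ofReal_mul, Complex.ofReal_re]
          have h2 : 0 ≤ Cr r * (2 / |L r|) := mul_nonneg (hCr_nonneg r) (by positivity)
          linarith
        · have hIL : Complex.I * ((L r : ℝ) : ℂ) ≠ 0 :=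
            mul_ne_zero Complex.I_ne_zero (by exact_mod_cast hLr)
          have habs_int : ‖∫ t in M..T,
              Complex.exp (Complex.I * ((L r : ℝ) : ℂ) * ((t : ℝ) : ℂ))‖ ≤ 2 / |L r| := by
            rw [integral_exp_mul_complex hIL, norm_div]
            have h1 : ‖Complex.I * ((L r : ℝ) : ℂ)‖ = |L r| := by
              rw [norm_mul, Complex.norm_I, one_mul, Complex.norm_real, Real.norm_eq_abs]
            rw [h1]
            gcongr
            calc ‖Complex.exp (Complex.I * ((L r : ℝ) : ℂ) * (T : ℂ)) -
                  Complex.exp (Complex.I * ((L r : ℝ) : ℂ) * (M : ℂ))‖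
                ≤ ‖Complex.exp (Complex.I * ((L r : ℝ) : ℂ) * (T : ℂ))‖ +
                  ‖Complex.exp (Complex.I * ((L r : ℝ) : ℂ) * (M : ℂ))‖ :=
                  by simpa using
                    norm_sub_le (Complex.exp (Complex.I * ((L r : ℝ) : ℂ) * (T : ℂ)))
                      (Complex.exp (Complex.I * ((L r : ℝ) : ℂ) * (M : ℂ)))
              _ = 2 := by rw [habs_exp_one', habs_exp_one']; norm_num
          have habs_coeff : ‖coeff r‖ = Cr r := by
            simp only [hcoeff_def]
            rw [norm_mul, Complex.norm_real, Real.norm_eq_abs, _root_.abs_of_nonneg (hCr_nonneg r),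
              habs_exp_one, mul_one]
          have h8 : ‖coeff r * ∫ t in M..T,
              Complex.exp (Complex.I * ((L r : ℝ) : ℂ) * ((t : ℝ) : ℂ))‖ ≤ Cr r * (2 / |L r|) := by
            rw [norm_mul, habs_coeff]
            exact mul_le_mul_of_nonneg_left habs_int (hCr_nonneg r)
          have h9 := neg_abs_le (coeff r * ∫ t in M..T,
              Complex.exp (Complex.I * ((L r : ℝ) : ℂ) * ((t : ℝ) : ℂ))).re
          have h10 := Complex.abs_re_le_norm (coeff r * ∫ t in M..T,
              Complex.exp (Complex.I * ((L r : ℝ) : ℂ) * ((t : ℝ) : ℂ)))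
          rw [if_neg hLr]
          linarith
      have hsum_ge := Finset.sum_le_sum hterm
      rw [Finset.sum_sub_distrib] at hsum_ge
      have hr₀R : (fun _ : Fin n => N) ∈ R := by
        simp only [hR_def, Fintype.mem_piFinset, Finset.mem_range]
        intro j; omega
      have hsingle : ((Nat.choose (2 * N) N : ℝ) ^ n) * (T - M)
          ≤ ∑ r ∈ R, (if L r = 0 then Cr r * (T - M) else 0) := by
        have hL0 : L (fun _ : Fin n => N) = 0 := by
          simp only [hL_def]
          simp
        have hval : (if L (fun _ : Fin n => N) = 0 then Cr (fun _ : Fin n => N) * (T - M) else 0)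
            = ((Nat.choose (2 * N) N : ℝ) ^ n) * (T - M) := by
          rw [if_pos hL0]
          simp only [hCr_def]
          rw [Finset.prod_const, Finset.card_univ, Fintype.card_fin]
        rw [← hval]
        refine Finset.single_le_sum (f := fun r => if L r = 0 then Cr r * (T - M) else 0)
          (fun r _ => ?_) hr₀R
        by_cases hl : L r = 0
        · rw [if_pos hl]; exact mul_nonneg (hCr_nonneg r) (by linarith)
        · rw [if_neg hl]
      linarith
    linarith
  -- choose T to get a contradiction
  have hC4 : (4 : ℝ) ^ (n * N) * c ^ N < ((Nat.choose (2 * N) N : ℝ) ^ n) := by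
    have h4 : (4 : ℝ) ^ N ≤ 2 * N * (Nat.choose (2 * N) N : ℝ) := by
      have h4' := Nat.four_pow_le_two_mul_self_mul_centralBinom N hN1
      rw [Nat.centralBinom_eq_two_mul_choose] at h4'
      exact_mod_cast h4'
    have h5 : (4 : ℝ) ^ (n * N) ≤ (2 * N) ^ n * (Nat.choose (2 * N) N : ℝ) ^ n := by
      rw [mul_comm n N, pow_mul, ← mul_pow]
      exact pow_le_pow_left₀ (by positivity) h4 n
    have h6 : (4 : ℝ) ^ (n * N) * c ^ N ≤
        ((2 * (N:ℝ)) ^ n * c ^ N) * (Nat.choose (2 * N) N : ℝ) ^ n := by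
      calc (4 : ℝ) ^ (n * N) * c ^ N
          ≤ ((2 * N) ^ n * (Nat.choose (2 * N) N : ℝ) ^ n) * c ^ N :=
            mul_le_mul_of_nonneg_right h5 (pow_nonneg hc0 N)
        _ = ((2 * (N:ℝ)) ^ n * c ^ N) * (Nat.choose (2 * N) N : ℝ) ^ n := by push_cast; ring
    have hch : (0:ℝ) < (Nat.choose (2 * N) N : ℝ) ^ n := by
      have : 0 < Nat.choose (2 * N) N := Nat.choose_pos (by omega)
      positivity
    calc (4 : ℝ) ^ (n * N) * c ^ N
        ≤ ((2 * (N:ℝ)) ^ n * c ^ N) * (Nat.choose (2 * N) N : ℝ) ^ n := h6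
      _ < 1 * (Nat.choose (2 * N) N : ℝ) ^ n := mul_lt_mul_of_pos_right hNlt hch
      _ = (Nat.choose (2 * N) N : ℝ) ^ n := one_mul _
  set γ : ℝ := ((Nat.choose (2 * N) N : ℝ) ^ n) - (4 : ℝ) ^ (n * N) * c ^ N with hγ_def
  have hγ0 : 0 < γ := by rw [hγ_def]; linarith
  set x : ℝ := (B + 1) / γ with hx_def
  have hx0 : 0 ≤ x := div_nonneg (by linarith) hγ0.le
  have hkey := key (M + x) (by linarith)
  have hMx : M + x - M = x := by ring
  rw [hMx] at hkey
  have hgx : γ * x = B + 1 := by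
    rw [hx_def]
    field_simp
  have hexp : γ * x = ((Nat.choose (2 * N) N : ℝ) ^ n) * x - (4:ℝ) ^ (n * N) * c ^ N * x := by
    rw [hγ_def]; ring
  linarith

end KronHelper

end

theorem translates_tend_to_equivalent
    (n : ℕ) (lam : Fin n → ℝ) (hlam : Function.Injective lam)
    (a b : Fin n → ℂ)
    (h : ∃ ψ : ℝ →ₗ[ℚ] ℝ, ∀ j, b j = a j * Complex.exp (Complex.I * (ψ (lam j) : ℂ))) :
    ∃ τ : ℕ → ℝ, StrictMono τ ∧ (∀ m, 0 < τ m) ∧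
      Filter.Tendsto τ Filter.atTop Filter.atTop ∧
      TendstoUniformly
        (fun m t => ∑ j, a j * Complex.exp (Complex.I * (lam j * (t + τ m) : ℝ)))
        (fun t => ∑ j, b j * Complex.exp (Complex.I * (lam j * t : ℝ)))
        Filter.atTop := by
  classical
  obtain ⟨ψ, hψ⟩ := h
  set θ : Fin n → ℝ := fun j => ψ (lam j) with hθ_def
  have hb : ∀ j, b j = a j * Complex.exp (Complex.I * ((θ j : ℝ) : ℂ)) := by
    intro j; rw [hθ_def]; exact hψ j
  have hrel : ∀ m : Fin n → ℤ, ∑ j, (m j : ℝ) * lam j = 0 → ∑ j, (m j : ℝ) * θ j = 0 := by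
    intro m hm
    have h1 : (∑ j, (m j) • lam j : ℝ) = 0 := by
      rw [← hm]; exact Finset.sum_congr rfl fun j _ => by rw [zsmul_eq_mul]
    have h2 : ψ (∑ j, (m j) • lam j) = 0 := by rw [h1, map_zero]
    rw [map_sum] at h2
    simp only [map_zsmul] at h2
    rw [← h2]
    exact Finset.sum_congr rfl fun j _ => by rw [hθ_def, zsmul_eq_mul]
  have key : ∀ (M : ℝ) (ε : ℝ), 0 < ε → ∃ τ : ℝ, M ≤ τ ∧ ∀ j,
      ‖Complex.exp (Complex.I * (lam j * τ : ℝ)) -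
        Complex.exp (Complex.I * (θ j : ℝ))‖ < ε := by
    intro M ε hε
    obtain ⟨τ, hτ1, hτ2⟩ := KronHelper.kron lam θ hrel (lt_min hε one_pos) (min_le_right _ _) M
    exact ⟨τ, hτ1, fun j => lt_of_lt_of_le (hτ2 j) (min_le_left _ _)⟩
  choose F hF1 hF2 using fun (q : ℕ × ℝ) => key q.2 (1 / ((q.1 : ℝ) + 1)) (by positivity)
  let τ : ℕ → ℝ := fun m =>
    Nat.rec (F (0, 1)) (fun m prev => F (m + 1, max (prev + 1) ((m : ℝ) + 2))) m
  have hτ0 : τ 0 = F (0, 1) := rfl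
  have hτs : ∀ m, τ (m + 1) = F (m + 1, max (τ m + 1) ((m : ℝ) + 2)) := fun m => rfl
  have h1le : (1 : ℝ) ≤ τ 0 := by rw [hτ0]; exact hF1 (0, 1)
  have hmono : StrictMono τ := by
    apply strictMono_nat_of_lt_succ
    intro m
    rw [hτs m]
    have hm := hF1 (m + 1, max (τ m + 1) ((m : ℝ) + 2))
    have h2 := le_max_left (τ m + 1) ((m : ℝ) + 2)
    simp only at hm
    linarith
  have hpos : ∀ m, 0 < τ m := by
    intro m
    have := hmono.monotone (Nat.zero_le m)
    linarith
  have hge : ∀ m : ℕ, (m : ℝ) ≤ τ m := by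
    intro m
    cases m with
    | zero => simpa using le_trans (by norm_num) h1le
    | succ m =>
      rw [hτs m]
      have hm := hF1 (m + 1, max (τ m + 1) ((m : ℝ) + 2))
      simp only at hm
      have h2 := le_max_right (τ m + 1) ((m : ℝ) + 2)
      push_cast
      linarith
  have htend : Filter.Tendsto τ Filter.atTop Filter.atTop :=
    Filter.tendsto_atTop_mono hge tendsto_natCast_atTop_atTop
  have herr : ∀ m j, ‖Complex.exp (Complex.I * ((lam j * τ m : ℝ) : ℂ)) -
      Complex.exp (Complex.I * ((θ j : ℝ) : ℂ))‖ < 1 / ((m : ℝ) + 1) := by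
    intro m j
    cases m with
    | zero => rw [hτ0]; simpa using hF2 (0, 1) j
    | succ m =>
      rw [hτs m]
      have := hF2 (m + 1, max (τ m + 1) ((m : ℝ) + 2)) j
      push_cast at this ⊢
      exact this
  refine ⟨τ, hmono, hpos, htend, ?_⟩
  have habs1 : ∀ x : ℝ, ‖Complex.exp (Complex.I * (x : ℂ))‖ = 1 := by
    intro x; rw [mul_comm]; exact Complex.norm_exp_ofReal_mul_I x
  set S : ℝ := ∑ j, ‖a j‖ with hS_def
  have hS0 : 0 ≤ S := Finset.sum_nonneg fun j _ => norm_nonneg _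
  rw [Metric.tendstoUniformly_iff]
  intro ε hε
  have h0 : Filter.Tendsto (fun m : ℕ => S * (1 / ((m : ℝ) + 1))) Filter.atTop (nhds 0) := by
    have := tendsto_one_div_add_atTop_nhds_zero_nat.const_mul S
    simpa using this
  filter_upwards [h0.eventually (eventually_lt_nhds hε)] with m hm
  intro t
  have hj : ∀ j : Fin n, ‖b j * Complex.exp (Complex.I * ((lam j * t : ℝ) : ℂ)) -
      a j * Complex.exp (Complex.I * ((lam j * (t + τ m) : ℝ) : ℂ))‖
      ≤ ‖a j‖ * (1 / ((m : ℝ) + 1)) := by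
    intro j
    have e1 : Complex.exp (Complex.I * ((lam j * (t + τ m) : ℝ) : ℂ))
        = Complex.exp (Complex.I * ((lam j * t : ℝ) : ℂ)) *
          Complex.exp (Complex.I * ((lam j * τ m : ℝ) : ℂ)) := by
      rw [← Complex.exp_add]
      congr 1
      push_cast
      ring
    have e3 : b j * Complex.exp (Complex.I * ((lam j * t : ℝ) : ℂ)) -
        a j * Complex.exp (Complex.I * ((lam j * (t + τ m) : ℝ) : ℂ))
        = a j * Complex.exp (Complex.I * ((lam j * t : ℝ) : ℂ)) *
          (Complex.exp (Complex.I * ((θ j : ℝ) : ℂ)) -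
            Complex.exp (Complex.I * ((lam j * τ m : ℝ) : ℂ))) := by
      rw [hb j, e1]; ring
    rw [e3, norm_mul, norm_mul, habs1, mul_one]
    refine mul_le_mul_of_nonneg_left ?_ (norm_nonneg _)
    rw [norm_sub_rev]
    exact (herr m j).le
  calc dist (∑ j, b j * Complex.exp (Complex.I * ((lam j * t : ℝ) : ℂ)))
        (∑ j, a j * Complex.exp (Complex.I * ((lam j * (t + τ m) : ℝ) : ℂ)))
      = ‖∑ j, (b j * Complex.exp (Complex.I * ((lam j * t : ℝ) : ℂ)) -
          a j * Complex.exp (Complex.I * ((lam j * (t + τ m) : ℝ) : ℂ)))‖ := by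
        rw [Complex.dist_eq, ← Finset.sum_sub_distrib]
    _ ≤ ∑ j, ‖b j * Complex.exp (Complex.I * ((lam j * t : ℝ) : ℂ)) -
          a j * Complex.exp (Complex.I * ((lam j * (t + τ m) : ℝ) : ℂ))‖ := by
        simpa using norm_sum_le Finset.univ
          (fun j => b j * Complex.exp (Complex.I * ((lam j * t : ℝ) : ℂ)) -
            a j * Complex.exp (Complex.I * ((lam j * (t + τ m) : ℝ) : ℂ)))
    _ ≤ ∑ j, ‖a j‖ * (1 / ((m : ℝ) + 1)) := Finset.sum_le_sum fun j _ => hj j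
    _ = S * (1 / ((m : ℝ) + 1)) := by rw [hS_def, Finset.sum_mul]
    _ < ε := hm
end

section
/- Let (f_m) be a sequence of trigonometric polynomials with common distinct real exponents {λ₁,…,λₙ}, all equivalent (∼*) to a fixed trigonometric polynomial f, and suppose f_m → g uniformly on ℝ where g(t) = Σ_{j=1}^n c_j e^{i λ_j t} is a trigonometric polynomial. Then g is equivalent to f. -/
open Real Filter BoundedContinuousFunction


lemma key_lemma {ι : Type} [Fintype ι] (l β : ι → ℝ)
    (hrel : ∀ r : ι → ℤ, ∑ i, (r i : ℝ) * l i = 0 → ∃ k : ℤ, ∑ i, (r i : ℝ) * β i = 2 * π * k) :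
    ∃ ψ : ℝ →ₗ[ℚ] ℝ, ∀ i, ∃ k : ℤ, ψ (l i) = β i + 2 * π * k := by
  classical
  set M : Submodule ℤ ℝ := Submodule.span ℤ (Set.range l) with hM
  haveI : Module.Finite ℤ M := Module.Finite.span_of_finite ℤ (Set.finite_range l)
  haveI : NoZeroSMulDivisors ℤ M := by infer_instance
  haveI : Module.Free ℤ M := inferInstance
  let κ := Module.Free.ChooseBasisIndex ℤ M
  let b : Module.Basis κ ℤ M := Module.Free.chooseBasis ℤ M
  have hbk : ∀ k : κ, ∃ r : ι → ℤ, ∑ i, r i • l i = ((b k : ℝ)) :=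
    fun k => (Submodule.mem_span_range_iff_exists_fun ℤ).mp (b k).2
  choose r hr using hbk
  set θ : κ → ℝ := fun k => ∑ i, (r k i : ℝ) * β i with hθ
  have libZ : LinearIndependent ℤ (fun k => (b k : ℝ)) :=
    b.linearIndependent.map' M.subtype (Submodule.ker_subtype M)
  have libQ : LinearIndependent ℚ (fun k => (b k : ℝ)) :=
    (LinearIndependent.iff_fractionRing ℤ ℚ).mp libZ
  set sp := Submodule.span ℚ (Set.range fun k => (b k : ℝ)) with hsp
  let bb : Module.Basis κ ℚ sp := Module.Basis.span libQ
  obtain ⟨ψ, hψ⟩ := LinearMap.exists_extend (bb.constr ℚ θ)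
  refine ⟨ψ, fun i => ?_⟩
  have hψ' : ∀ x : sp, ψ x = (bb.constr ℚ θ) x := fun x => by
    rw [← hψ]; rfl
  have hψb : ∀ k : κ, ψ (b k : ℝ) = θ k := by
    intro k
    have hmem : ((b k : ℝ)) ∈ sp := Submodule.subset_span ⟨k, rfl⟩
    have h2 : ψ (b k : ℝ) = (bb.constr ℚ θ) ⟨(b k : ℝ), hmem⟩ := hψ' ⟨_, hmem⟩
    rw [h2]
    have hbb : bb k = ⟨(b k : ℝ), hmem⟩ := by
      exact Module.Basis.span_apply libQ k
    rw [← hbb, Module.Basis.constr_basis]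
  have hli : l i ∈ M := Submodule.subset_span ⟨i, rfl⟩
  set m : κ → ℤ := fun k => b.repr ⟨l i, hli⟩ k with hm
  have hrepr : ∑ k, (m k : ℝ) * (b k : ℝ) = l i := by
    have hb := b.sum_repr ⟨l i, hli⟩
    calc ∑ k, (m k : ℝ) * (b k : ℝ) = ((∑ k, m k • b k : M) : ℝ) := by
          push_cast; exact Finset.sum_congr rfl fun k _ => (zsmul_eq_mul _ _).symm
    _ = l i := by rw [hb]
  have hpsi : ψ (l i) = ∑ k, (m k : ℝ) * θ k := by
    rw [← hrepr, map_sum]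
    refine Finset.sum_congr rfl fun k _ => ?_
    rw [show ((m k : ℝ)) * (b k : ℝ) = m k • (b k : ℝ) from (zsmul_eq_mul _ _).symm,
      map_zsmul, hψb, zsmul_eq_mul]
  set R : ι → ℤ := fun i' => (∑ k, m k * r k i') - (if i' = i then 1 else 0) with hR
  have expand : ∀ g : ι → ℝ, ∑ i', (R i' : ℝ) * g i' =
      (∑ k, (m k : ℝ) * ∑ i', (r k i' : ℝ) * g i') - g i := by
    intro g
    have e1 : ∀ i', (R i' : ℝ) * g i' =
        (∑ k, (m k : ℝ) * ((r k i' : ℝ) * g i')) - (if i' = i then g i' else 0) := by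
      intro i'
      simp only [hR]
      push_cast
      rw [sub_mul, Finset.sum_mul]
      congr 1
      · exact Finset.sum_congr rfl fun k _ => by ring
      · split <;> simp
    rw [Finset.sum_congr rfl fun i' _ => e1 i', Finset.sum_sub_distrib,
      Finset.sum_ite_eq' Finset.univ i]
    simp only [Finset.mem_univ, if_true]
    rw [Finset.sum_comm]
    congr 1
    exact Finset.sum_congr rfl fun k _ => (Finset.mul_sum _ _ _).symm
  have h0 : ∑ i', (R i' : ℝ) * l i' = 0 := by
    rw [expand l]
    have e2 : ∀ k, ∑ i', (r k i' : ℝ) * l i' = (b k : ℝ) := by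
      intro k; rw [← hr k]
      exact Finset.sum_congr rfl fun i' _ => (zsmul_eq_mul _ _).symm
    rw [Finset.sum_congr rfl fun k _ => by rw [e2 k], hrepr, sub_self]
  obtain ⟨k0, hk0⟩ := hrel R h0
  refine ⟨k0, ?_⟩
  rw [expand β] at hk0
  have : ∑ k, (m k : ℝ) * ∑ i', (r k i' : ℝ) * β i' = ψ (l i) := by
    rw [hpsi]
  rw [this] at hk0
  linarith


noncomputable def charHom (l : ℝ) : Multiplicative ℝ →* ℂ where
  toFun := fun t => Complex.exp (Complex.I * ((l * (Multiplicative.toAdd t) : ℝ) : ℂ))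
  map_one' := by simp
  map_mul' := fun x y => by
    show Complex.exp (Complex.I * ((l * Multiplicative.toAdd (x * y) : ℝ) : ℂ)) = _
    rw [toAdd_mul, ← Complex.exp_add]
    congr 1
    push_cast
    ring

noncomputable def charBCF (l : ℝ) : ℝ →ᵇ ℂ :=
  BoundedContinuousFunction.ofNormedAddCommGroup
    (fun t => Complex.exp (Complex.I * ((l * t : ℝ) : ℂ)))
    (by fun_prop) 1 (fun t => by
      rw [Complex.norm_exp]
      simp)

lemma charHom_injective : Function.Injective charHom := by
  intro l l' h
  by_contra hne
  have hd : l - l' ≠ 0 := sub_ne_zero.mpr hne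
  have := DFunLike.congr_fun h (Multiplicative.ofAdd (Real.pi / (l - l')))
  simp only [charHom, MonoidHom.coe_mk, OneHom.coe_mk, toAdd_ofAdd] at this
  have h1 : Complex.exp (Complex.I * ((l * (Real.pi / (l - l')) : ℝ) : ℂ) -
      Complex.I * ((l' * (Real.pi / (l - l')) : ℝ) : ℂ)) = 1 := by
    rw [Complex.exp_sub, this, div_self]
    exact Complex.exp_ne_zero _
  have h2 : Complex.I * ((l * (Real.pi / (l - l')) : ℝ) : ℂ) -
      Complex.I * ((l' * (Real.pi / (l - l')) : ℝ) : ℂ) = Real.pi * Complex.I := by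
    have hdC : ((l : ℂ) - (l' : ℂ)) ≠ 0 := by exact_mod_cast hd
    push_cast
    field_simp
  rw [h2, Complex.exp_pi_mul_I] at h1
  norm_num at h1

set_option maxHeartbeats 1000000 in
set_option synthInstance.maxHeartbeats 400000 in
lemma coeff_tendsto {n : ℕ} (lam : Fin n → ℝ) (hlam : Function.Injective lam)
    (a : ℕ → Fin n → ℂ) (c : Fin n → ℂ)
    (hconv : TendstoUniformly
      (fun m t => ∑ j, a m j * Complex.exp (Complex.I * (lam j * t : ℝ)))
      (fun t => ∑ j, c j * Complex.exp (Complex.I * (lam j * t : ℝ)))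
      Filter.atTop) :
    ∀ j, Filter.Tendsto (fun m => a m j) Filter.atTop (nhds (c j)) := by
  classical
  set E : Fin n → (ℝ →ᵇ ℂ) := fun j => charBCF (lam j) with hE
  have liFun : LinearIndependent ℂ (fun j => ((charHom (lam j)) : Multiplicative ℝ → ℂ)) :=
    (linearIndependent_monoidHom (Multiplicative ℝ) ℂ).comp (fun j => charHom (lam j))
      (charHom_injective.comp hlam)
  let coeL : (ℝ →ᵇ ℂ) →ₗ[ℂ] (ℝ → ℂ) :=
    { toFun := fun f => ⇑f, map_add' := fun f g => rfl, map_smul' := fun s f => rfl }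
  have liE : LinearIndependent ℂ E := by
    apply LinearIndependent.of_comp coeL
    exact liFun
  let L : (Fin n → ℂ) →ₗ[ℂ] (ℝ →ᵇ ℂ) :=
    { toFun := fun v => ∑ j, v j • E j,
      map_add' := fun v w => by
        simp only [Pi.add_apply, add_smul, Finset.sum_add_distrib],
      map_smul' := fun s v => by
        simp only [Pi.smul_apply, smul_eq_mul, RingHom.id_apply, Finset.smul_sum, smul_smul] }
  have hinj : Function.Injective L := by
    rw [← LinearMap.ker_eq_bot, LinearMap.ker_eq_bot']
    intro v hv
    funext j
    exact Fintype.linearIndependent_iff.mp liE v hv j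
  let eqv := LinearEquiv.ofInjective L hinj
  haveI : FiniteDimensional ℂ (LinearMap.range L) := inferInstance
  let T : (LinearMap.range L) →L[ℂ] (Fin n → ℂ) :=
    ⟨eqv.symm.toLinearMap, eqv.symm.toLinearMap.continuous_of_finiteDimensional⟩
  have hbound : ∀ v : Fin n → ℂ, ‖v‖ ≤ ‖T‖ * ‖L v‖ := by
    intro v
    have h1 : T ⟨L v, LinearMap.mem_range_self L v⟩ = v := by
      have h0 : (⟨L v, LinearMap.mem_range_self L v⟩ : LinearMap.range L) = eqv v :=
        Subtype.ext rfl
      rw [h0]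
      exact eqv.symm_apply_apply v
    calc ‖v‖ = ‖T ⟨L v, LinearMap.mem_range_self L v⟩‖ := by rw [h1]
    _ ≤ ‖T‖ * ‖(⟨L v, LinearMap.mem_range_self L v⟩ : LinearMap.range L)‖ := T.le_opNorm _
    _ = ‖T‖ * ‖L v‖ := rfl
  have hcoe : ∀ v : Fin n → ℂ,
      ⇑(L v) = fun t => ∑ j, v j * Complex.exp (Complex.I * (lam j * t : ℝ)) := by
    intro v
    funext t
    show (∑ j, v j • E j) t = _
    rw [BoundedContinuousFunction.coe_sum, Finset.sum_apply]
    exact Finset.sum_congr rfl fun j _ => rfl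
  have hF : Filter.Tendsto (fun m => L (a m)) Filter.atTop (nhds (L c)) := by
    rw [tendsto_iff_tendstoUniformly]
    have h1 : (fun m => ⇑(L (a m))) = fun m t => ∑ j, a m j * Complex.exp (Complex.I * (lam j * t : ℝ)) := by
      funext m; exact hcoe (a m)
    rw [h1, hcoe c]
    exact hconv
  have hdist : Filter.Tendsto (fun m => dist (L (a m)) (L c)) Filter.atTop (nhds 0) :=
    tendsto_iff_dist_tendsto_zero.mp hF
  have hAll : Filter.Tendsto (fun m => a m) Filter.atTop (nhds c) := by
    rw [tendsto_iff_dist_tendsto_zero]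
    refine squeeze_zero (g := fun m => ‖T‖ * dist (L (a m)) (L c))
      (fun m => dist_nonneg) (fun m => ?_) ?_
    · show dist (a m) c ≤ ‖T‖ * dist (L (a m)) (L c)
      rw [dist_eq_norm, dist_eq_norm, ← map_sub]
      exact hbound (a m - c)
    · have := hdist.const_mul ‖T‖
      simpa using this
  intro j
  exact ((continuous_apply j).tendsto c).comp hAll


theorem uniform_limit_of_equivalent_is_equivalent'
    (n : ℕ) (lam : Fin n → ℝ) (hlam : Function.Injective lam)
    (f : Fin n → ℂ) (a : ℕ → Fin n → ℂ) (c : Fin n → ℂ)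
    (ha : ∀ m, ∃ ψ : ℝ →ₗ[ℚ] ℝ, ∀ j,
      a m j = f j * Complex.exp (Complex.I * (ψ (lam j) : ℂ)))
    (hco : ∀ j, Filter.Tendsto (fun m => a m j) Filter.atTop (nhds (c j))) :
    ∃ ψ : ℝ →ₗ[ℚ] ℝ, ∀ j, c j = f j * Complex.exp (Complex.I * (ψ (lam j) : ℂ)) := by
  classical
  choose ψm hψm using ha
  have hexp : ∀ i : {j : Fin n // f j ≠ 0},
      Filter.Tendsto (fun m => Complex.exp (Complex.I * ((ψm m (lam i.1) : ℝ) : ℂ)))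
        Filter.atTop (nhds (c i.1 / f i.1)) := by
    intro i
    have h1 := (hco i.1).div_const (f i.1)
    have h2 : (fun m => a m i.1 / f i.1) =
        fun m => Complex.exp (Complex.I * ((ψm m (lam i.1) : ℝ) : ℂ)) := by
      funext m
      rw [hψm m i.1, mul_div_cancel_left₀ _ i.2]
    rwa [h2] at h1
  have hune : ∀ i : {j : Fin n // f j ≠ 0}, c i.1 / f i.1 ≠ 0 ∧
      ‖c i.1 / f i.1‖ = 1 := by
    intro i
    have h1 : Filter.Tendsto (fun m => ‖
        (Complex.exp (Complex.I * ((ψm m (lam i.1) : ℝ) : ℂ)))‖) Filter.atTop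
        (nhds ‖c i.1 / f i.1‖) :=
      (continuous_norm.tendsto _).comp (hexp i)
    have h2 : (fun m => ‖Complex.exp (Complex.I * ((ψm m (lam i.1) : ℝ) : ℂ))‖)
        = fun _ => (1 : ℝ) := by
      funext m
      rw [Complex.norm_exp]
      simp
    rw [h2] at h1
    have habs : ‖c i.1 / f i.1‖ = 1 := tendsto_nhds_unique h1 tendsto_const_nhds
    refine ⟨fun h0 => ?_, habs⟩
    rw [h0] at habs; simp at habs
  set β : {j : Fin n // f j ≠ 0} → ℝ := fun i => Complex.arg (c i.1 / f i.1) with hβ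
  have huβ : ∀ i, c i.1 / f i.1 = Complex.exp (Complex.I * ((β i : ℝ) : ℂ)) := by
    intro i
    have h3 := Complex.norm_mul_exp_arg_mul_I (c i.1 / f i.1)
    rw [(hune i).2] at h3
    rw [← h3]
    simp [mul_comm, hβ]
  have hrel : ∀ r : {j : Fin n // f j ≠ 0} → ℤ, ∑ i, (r i : ℝ) * lam i.1 = 0 →
      ∃ k : ℤ, ∑ i, (r i : ℝ) * β i = 2 * π * k := by
    intro r hr
    have hψ0 : ∀ m, ∑ i, (r i : ℝ) * ψm m (lam i.1) = 0 := by
      intro m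
      have hq : (∑ i, (r i : ℚ) • (lam i.1) : ℝ) = 0 := by
        rw [← hr]
        exact Finset.sum_congr rfl fun i _ => by rw [Rat.smul_def]; push_cast; ring
      have h2 := congrArg (ψm m) hq
      rw [map_sum, map_zero] at h2
      rw [← h2]
      exact Finset.sum_congr rfl fun i _ => by
        rw [map_smul, Rat.smul_def]; push_cast; ring
    have hprod1 : ∀ m, ∏ i, (Complex.exp (Complex.I * ((ψm m (lam i.1) : ℝ) : ℂ))) ^ (r i)
        = 1 := by
      intro m
      have e1 : ∀ i, (Complex.exp (Complex.I * ((ψm m (lam i.1) : ℝ) : ℂ))) ^ (r i)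
          = Complex.exp ((r i : ℂ) * (Complex.I * ((ψm m (lam i.1) : ℝ) : ℂ))) := by
        intro i; rw [Complex.exp_int_mul]
      rw [Finset.prod_congr rfl fun i _ => e1 i, ← Complex.exp_sum]
      have e2 : ∑ i, (r i : ℂ) * (Complex.I * ((ψm m (lam i.1) : ℝ) : ℂ))
          = Complex.I * ((∑ i, (r i : ℝ) * ψm m (lam i.1) : ℝ) : ℂ) := by
        push_cast
        rw [Finset.mul_sum]
        exact Finset.sum_congr rfl fun i _ => by ring
      rw [e2, hψ0 m, Complex.ofReal_zero, mul_zero, Complex.exp_zero]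
    have hprodlim : Filter.Tendsto
        (fun m => ∏ i, (Complex.exp (Complex.I * ((ψm m (lam i.1) : ℝ) : ℂ))) ^ (r i))
        Filter.atTop (nhds (∏ i, (c i.1 / f i.1) ^ (r i))) := by
      apply tendsto_finset_prod
      intro i _
      exact ((continuousAt_zpow₀ _ _ (Or.inl (hune i).1)).tendsto).comp (hexp i)
    have h3 : (fun m => ∏ i, (Complex.exp (Complex.I * ((ψm m (lam i.1) : ℝ) : ℂ))) ^ (r i))
        = fun _ => (1 : ℂ) := funext hprod1
    rw [h3] at hprodlim
    have hprodu : ∏ i, (c i.1 / f i.1) ^ (r i) = 1 :=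
      (tendsto_nhds_unique tendsto_const_nhds hprodlim).symm
    have e3 : ∀ i, (c i.1 / f i.1) ^ (r i)
        = Complex.exp ((r i : ℂ) * (Complex.I * ((β i : ℝ) : ℂ))) := fun i => by
      rw [huβ i, Complex.exp_int_mul]
    rw [Finset.prod_congr rfl fun i _ => e3 i, ← Complex.exp_sum] at hprodu
    have e4 : ∑ i, (r i : ℂ) * (Complex.I * ((β i : ℝ) : ℂ))
        = Complex.I * ((∑ i, (r i : ℝ) * β i : ℝ) : ℂ) := by
      push_cast
      rw [Finset.mul_sum]
      exact Finset.sum_congr rfl fun i _ => by ring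
    rw [e4] at hprodu
    obtain ⟨k, hk⟩ := Complex.exp_eq_one_iff.mp hprodu
    refine ⟨k, ?_⟩
    have e5 : ((∑ i, (r i : ℝ) * β i : ℝ) : ℂ) = ((2 * π * k : ℝ) : ℂ) := by
      apply mul_left_cancel₀ Complex.I_ne_zero
      rw [hk]; push_cast; ring
    exact_mod_cast e5
  obtain ⟨ψ, hψ⟩ := key_lemma (fun i => lam i.1) β hrel
  refine ⟨ψ, fun j => ?_⟩
  by_cases hf : f j = 0
  · have hz : (fun m => a m j) = fun _ => (0 : ℂ) := by
      funext m; rw [hψm m j, hf, zero_mul]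
    have h0 : c j = 0 := by
      have := hco j
      rw [hz] at this
      exact tendsto_nhds_unique this tendsto_const_nhds
    rw [h0, hf, zero_mul]
  · obtain ⟨k, hk⟩ := hψ ⟨j, hf⟩
    have : Complex.exp (Complex.I * ((ψ (lam j) : ℝ) : ℂ)) = c j / f j := by
      rw [show ψ (lam j) = β ⟨j, hf⟩ + 2 * π * k from hk]
      rw [huβ ⟨j, hf⟩]
      push_cast
      rw [mul_add, Complex.exp_add]
      have e6 : Complex.exp (Complex.I * (2 * (π : ℂ) * (k : ℂ))) = 1 := by
        have := Complex.exp_int_mul_two_pi_mul_I k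
        rw [← this]
        congr 1
        ring
      rw [e6, mul_one]
    rw [this, mul_div_cancel₀ _ hf]


theorem uniform_limit_of_equivalent_is_equivalent
    (n : ℕ) (lam : Fin n → ℝ) (hlam : Function.Injective lam)
    (f : Fin n → ℂ) (a : ℕ → Fin n → ℂ) (c : Fin n → ℂ)
    (ha : ∀ m, ∃ ψ : ℝ →ₗ[ℚ] ℝ, ∀ j,
      a m j = f j * Complex.exp (Complex.I * (ψ (lam j) : ℂ)))
    (hconv : TendstoUniformly
      (fun m t => ∑ j, a m j * Complex.exp (Complex.I * (lam j * t : ℝ)))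
      (fun t => ∑ j, c j * Complex.exp (Complex.I * (lam j * t : ℝ)))
      Filter.atTop) :
    ∃ ψ : ℝ →ₗ[ℚ] ℝ, ∀ j, c j = f j * Complex.exp (Complex.I * (ψ (lam j) : ℂ)) :=
  uniform_limit_of_equivalent_is_equivalent' n lam hlam f a c ha
    (coeff_tendsto lam hlam a c hconv)
end
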